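/- Let σ be a nondecreasing sigmoidal function satisfying (Σ1)–(Σ5) with parameters m ≥ 2 and β > m + 1. Then for every s ∈ {1, …, m}, the algebraic moment 𝒜_s(φ_σ^{(s)}, x) := ∑_{k∈ℤ} φ_σ^{(s)}(x−k)(k−x)^s equals s! for every x ∈ ℝ. -/

import Mathlib

open Filter Topology MeasureTheory

/-- The density (kernel) function generated by a sigmoidal function. -/
noncomputable def phiFn (σ : ℝ → ℝ) (x : ℝ) : ℝ := (σ (x + 1) - σ (x - 1)) / 2

/-- σ is a (measurable) sigmoidal function. -/
def Sigmoidal (σ : ℝ → ℝ) : Prop :=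
  Measurable σ ∧ Tendsto σ atBot (𝓝 0) ∧ Tendsto σ atTop (𝓝 1)

/-- (Σ1): σ(x) - 1/2 is an odd function. -/
def Sigma1 (σ : ℝ → ℝ) : Prop := ∀ x : ℝ, σ (-x) - 1/2 = -(σ x - 1/2)

/-- (Σ2): σ ∈ C²(ℝ) and σ is concave on [0, +∞). -/
def Sigma2 (σ : ℝ → ℝ) : Prop := ContDiff ℝ 2 σ ∧ ConcaveOn ℝ (Set.Ici 0) σ

/-- (Σ3): σ(x) = O(|x|^{-α-1}) as x → -∞, with α > 0. -/
def Sigma3 (σ : ℝ → ℝ) (α : ℝ) : Prop :=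
  0 < α ∧ σ =O[atBot] fun x : ℝ => |x| ^ (-α - 1)

/-- (Σ4): σ ∈ C^m(ℝ), m ≥ 2, and for each s = 1,…,m there are constants
`K s, C s > 0` with |σ^{(s)}(x)| ≤ C s * |x|^{-β-1} for |x| ≥ K s, where β > m + 1. -/
def Sigma4 (σ : ℝ → ℝ) (m : ℕ) (β : ℝ) (K C : ℕ → ℝ) : Prop :=
  2 ≤ m ∧ (m : ℝ) + 1 < β ∧ ContDiff ℝ m σ ∧
    ∀ s : ℕ, 1 ≤ s → s ≤ m → 0 < K s ∧ 0 < C s ∧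
      ∀ x : ℝ, K s ≤ |x| → |iteratedDeriv s σ x| ≤ C s * |x| ^ (-β - 1)

/-- Algebraic moment of order ν of Φ. -/
noncomputable def algMoment (Φ : ℝ → ℝ) (ν : ℕ) (x : ℝ) : ℝ :=
  ∑' k : ℤ, Φ (x - (k : ℝ)) * ((k : ℝ) - x) ^ ν

/-- (Σ5): the algebraic moments of order j = 1,…,m of φ_σ are constants A j. -/
def Sigma5 (σ : ℝ → ℝ) (m : ℕ) (A : ℕ → ℝ) : Prop :=
  ∀ j : ℕ, 1 ≤ j → j ≤ m → ∀ x : ℝ, algMoment (phiFn σ) j x = A j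

/-- Truncated algebraic moment of order ν of Φ (associated with integers a < b). -/
noncomputable def truncMoment (Φ : ℝ → ℝ) (ν : ℕ) (a b : ℤ) (n : ℕ) (u : ℝ) : ℝ :=
  ∑ k ∈ Finset.Icc ((n : ℤ) * a) ((n : ℤ) * b), Φ (u - (k : ℝ)) * ((k : ℝ) - u) ^ ν

/-- The ν-th discrete absolute moment function of Φ (before taking sup over u). -/
noncomputable def discMoment (Φ : ℝ → ℝ) (ν : ℝ) (u : ℝ) : ℝ :=
  ∑' k : ℤ, |Φ (u - (k : ℝ))| * |u - (k : ℝ)| ^ ν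

/-- The Riemann zeta function (as a real series), ζ(p) = ∑_{i≥1} i^{-p}. -/
noncomputable def zetaR (p : ℝ) : ℝ := ∑' i : ℕ, ((i : ℝ) + 1) ^ (-p)

/-- The NN operator F_n activated by σ. -/
noncomputable def Fop (σ : ℝ → ℝ) (f : ℝ → ℝ) (a b : ℝ) (n : ℕ) (x : ℝ) : ℝ :=
  (∑ k ∈ Finset.Icc ⌈(n : ℝ) * a⌉ ⌊(n : ℝ) * b⌋, f ((k : ℝ) / n) * phiFn σ ((n : ℝ) * x - k)) /
    (∑ k ∈ Finset.Icc ⌈(n : ℝ) * a⌉ ⌊(n : ℝ) * b⌋, phiFn σ ((n : ℝ) * x - k))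

/-- The modified NN operator F̃_n (integer endpoints a < b). -/
noncomputable def Ftil (σ : ℝ → ℝ) (f : ℝ → ℝ) (a b : ℤ) (n : ℕ) (x : ℝ) : ℝ :=
  ∑ k ∈ Finset.Icc ((n : ℤ) * a) ((n : ℤ) * b), f ((k : ℝ) / n) * phiFn σ ((n : ℝ) * x - (k : ℝ))

/-- Sup-norm of g on [a,b]. -/
noncomputable def supNormOn (g : ℝ → ℝ) (a b : ℝ) : ℝ := ⨆ x : Set.Icc a b, |g x|

/-- Modulus of continuity of g on [a,b]. -/
noncomputable def modulus (g : ℝ → ℝ) (a b h : ℝ) : ℝ :=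
  sSup {y : ℝ | ∃ u ∈ Set.Icc a b, ∃ v ∈ Set.Icc a b, |u - v| ≤ h ∧ y = |g u - g v|}

/-- Discrete absolute moment (natural order ν) of Φ: sup over u of the moment series. -/
noncomputable def dmomentN (Φ : ℝ → ℝ) (ν : ℕ) : ℝ :=
  ⨆ u : ℝ, ∑' k : ℤ, |Φ (u - (k : ℝ))| * |u - (k : ℝ)| ^ ν



section Aux

variable {σ : ℝ → ℝ} {m : ℕ}

lemma phi_eq (σ : ℝ → ℝ) :
    phiFn σ = (2⁻¹ : ℝ) • ((fun x => σ (x + 1)) - fun x => σ (x - 1)) := by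
  funext x
  simp only [phiFn, Pi.smul_apply, Pi.sub_apply, smul_eq_mul]
  ring

lemma contDiff_shift (h : ContDiff ℝ m σ) (c : ℝ) : ContDiff ℝ m (fun x : ℝ => σ (x + c)) :=
  h.comp (contDiff_id.add contDiff_const)

lemma phi_contDiff (h : ContDiff ℝ m σ) : ContDiff ℝ m (phiFn σ) := by
  rw [phi_eq]
  exact (((contDiff_shift h 1).sub (by
    have := contDiff_shift h (-1)
    simpa [sub_eq_add_neg] using this))).const_smul (2⁻¹ : ℝ)

lemma iter_phi (h : ContDiff ℝ m σ) {r : ℕ} (hr : r ≤ m) (y : ℝ) :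
    iteratedDeriv r (phiFn σ) y = (iteratedDeriv r σ (y + 1) - iteratedDeriv r σ (y - 1)) / 2 := by
  have hc : ContDiff ℝ r σ := h.of_le (by exact_mod_cast hr)
  have h1 : ContDiff ℝ r (fun x : ℝ => σ (x + 1)) := contDiff_shift hc 1
  have h2 : ContDiff ℝ r (fun x : ℝ => σ (x - 1)) := by
    have := contDiff_shift hc (-1); simpa [sub_eq_add_neg] using this
  rw [phi_eq, ← iteratedDerivWithin_univ,
    iteratedDerivWithin_const_smul (f := (fun x => σ (x + 1)) - fun x => σ (x - 1))
      (Set.mem_univ y) uniqueDiffOn_univ (2⁻¹ : ℝ) ((h1.sub h2).contDiffWithinAt),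
    iteratedDerivWithin_sub (Set.mem_univ y) uniqueDiffOn_univ h1.contDiffWithinAt h2.contDiffWithinAt,
    iteratedDerivWithin_univ, iteratedDerivWithin_univ]
  have e1 : iteratedDeriv r (fun x : ℝ => σ (x + 1)) y = iteratedDeriv r σ (y + 1) := by
    rw [iteratedDeriv_comp_add_const]
  have e2 : iteratedDeriv r (fun x : ℝ => σ (x - 1)) y = iteratedDeriv r σ (y - 1) := by
    have := iteratedDeriv_comp_add_const r σ (-1)
    have e : (fun x : ℝ => σ (x - 1)) = (fun x : ℝ => σ (x + (-1))) := by
      funext x; rw [sub_eq_add_neg]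
    rw [e, this]
    norm_num [sub_eq_add_neg]
  rw [e1, e2]
  simp [smul_eq_mul]
  ring

end Aux

section Decay

variable {σ : ℝ → ℝ} {m : ℕ} {β : ℝ} {K C : ℕ → ℝ}

lemma rpow_antitone {a b e : ℝ} (ha : 0 < a) (hab : a ≤ b) (he : e ≤ 0) : b ^ e ≤ a ^ e :=
  Real.rpow_le_rpow_of_nonpos ha hab he

lemma tail_decay (h : ContDiff ℝ m σ) (hm : 2 ≤ m) (hβ : (0:ℝ) ≤ β)
    (hK : ∀ s : ℕ, 1 ≤ s → s ≤ m → 0 < K s ∧ 0 < C s ∧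
      ∀ x : ℝ, K s ≤ |x| → |iteratedDeriv s σ x| ≤ C s * |x| ^ (-β - 1))
    {r : ℕ} (hr : r ≤ m) :
    ∃ R : ℝ, 2 ≤ R ∧ ∃ Ct : ℝ, 0 < Ct ∧ ∀ y : ℝ, R ≤ |y| →
      |iteratedDeriv r (phiFn σ) y| ≤ Ct * (|y| - 1) ^ (-β - 1) := by
  have he : (-β - 1 : ℝ) ≤ 0 := by linarith
  rcases Nat.eq_zero_or_pos r with hr0 | hrpos
  · -- r = 0 : mean value theorem
    subst hr0
    obtain ⟨hK1, hC1, hb1⟩ := hK 1 le_rfl (by omega)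
    refine ⟨max 2 (K 1 + 1), le_max_left _ _, C 1, hC1, fun y hy => ?_⟩
    have hy2 : (2:ℝ) ≤ |y| := le_trans (le_max_left _ _) hy
    have hyK : K 1 + 1 ≤ |y| := le_trans (le_max_right _ _) hy
    have hdiff : Differentiable ℝ σ := h.differentiable (by exact_mod_cast (show m ≠ 0 by omega))
    obtain ⟨c, hc, hceq⟩ := exists_hasDerivAt_eq_slope σ (deriv σ)
      (show y - 1 < y + 1 by linarith) (h.continuous.continuousOn)
      (fun z _ => (hdiff z).hasDerivAt)
    have hyc : |y - c| < 1 := by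
      rw [abs_lt]; constructor <;> [linarith [hc.2]; linarith [hc.1]]
    have hcabs : |y| - 1 ≤ |c| := by
      have := abs_sub_abs_le_abs_sub y c
      linarith
    have hcK : K 1 ≤ |c| := by linarith
    have hval : iteratedDeriv 0 (phiFn σ) y = deriv σ c := by
      rw [iteratedDeriv_zero, hceq]
      simp only [phiFn]
      congr 1
      ring
    rw [hval, ← iteratedDeriv_one]
    calc |iteratedDeriv 1 σ c| ≤ C 1 * |c| ^ (-β - 1) := hb1 c hcK
      _ ≤ C 1 * (|y| - 1) ^ (-β - 1) := by
          have h1 : (0:ℝ) < |y| - 1 := by linarith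
          exact mul_le_mul_of_nonneg_left (rpow_antitone h1 hcabs he) hC1.le
  · -- r ≥ 1
    obtain ⟨hKr, hCr, hbr⟩ := hK r hrpos hr
    refine ⟨max 2 (K r + 1), le_max_left _ _, C r, hCr, fun y hy => ?_⟩
    have hy2 : (2:ℝ) ≤ |y| := le_trans (le_max_left _ _) hy
    have hyK : K r + 1 ≤ |y| := le_trans (le_max_right _ _) hy
    have h1 : (0:ℝ) < |y| - 1 := by linarith
    have hp : |y| - 1 ≤ |y + 1| := by
      have := abs_sub_abs_le_abs_sub y (-1)
      simp only [sub_neg_eq_add, abs_neg, abs_one] at this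
      linarith
    have hm' : |y| - 1 ≤ |y - 1| := by
      have := abs_sub_abs_le_abs_sub y 1
      simp only [abs_one] at this
      linarith
    have b1 : |iteratedDeriv r σ (y + 1)| ≤ C r * (|y| - 1) ^ (-β - 1) :=
      le_trans (hbr _ (by linarith)) (mul_le_mul_of_nonneg_left (rpow_antitone h1 hp he) hCr.le)
    have b2 : |iteratedDeriv r σ (y - 1)| ≤ C r * (|y| - 1) ^ (-β - 1) :=
      le_trans (hbr _ (by linarith)) (mul_le_mul_of_nonneg_left (rpow_antitone h1 hm' he) hCr.le)
    rw [iter_phi h hr]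
    calc |(iteratedDeriv r σ (y + 1) - iteratedDeriv r σ (y - 1)) / 2|
        ≤ (|iteratedDeriv r σ (y + 1)| + |iteratedDeriv r σ (y - 1)|) / 2 := by
          rw [abs_div]
          simp only [abs_two]
          gcongr
          exact abs_sub _ _
      _ ≤ C r * (|y| - 1) ^ (-β - 1) := by linarith

lemma global_decay (h : ContDiff ℝ m σ) (hm : 2 ≤ m) (hβ : (0:ℝ) ≤ β)
    (hK : ∀ s : ℕ, 1 ≤ s → s ≤ m → 0 < K s ∧ 0 < C s ∧
      ∀ x : ℝ, K s ≤ |x| → |iteratedDeriv s σ x| ≤ C s * |x| ^ (-β - 1))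
    {r : ℕ} (hr : r ≤ m) :
    ∃ D : ℝ, 0 < D ∧ ∀ y : ℝ, |iteratedDeriv r (phiFn σ) y| ≤ D * (1 + |y|) ^ (-β - 1) := by
  have he : (-β - 1 : ℝ) ≤ 0 := by linarith
  obtain ⟨R, hR2, Ct, hCt, htail⟩ := tail_decay h hm hβ hK hr
  have hcont : Continuous (iteratedDeriv r (phiFn σ)) :=
    (phi_contDiff h).continuous_iteratedDeriv r (by exact_mod_cast hr)
  obtain ⟨M, hM⟩ := (isCompact_Icc (a := -R) (b := R)).exists_bound_of_continuousOn
    hcont.continuousOn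
  have hM0 : 0 ≤ M := le_trans (norm_nonneg _) (hM 0 (by constructor <;> linarith))
  have hRpos : (0:ℝ) < 1 + R := by linarith
  set D : ℝ := Ct * 3 ^ (β + 1) + (M + 1) * (1 + R) ^ (β + 1) with hD
  have hD1 : (0:ℝ) < Ct * 3 ^ (β + 1) := mul_pos hCt (Real.rpow_pos_of_pos (by norm_num) _)
  have hD2 : (0:ℝ) < (M + 1) * (1 + R) ^ (β + 1) :=
    mul_pos (by linarith) (Real.rpow_pos_of_pos hRpos _)
  refine ⟨D, by positivity, fun y => ?_⟩
  have hy0 : (0:ℝ) < 1 + |y| := by positivity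
  have hyR : (0:ℝ) < (1 + |y|) ^ (-β - 1) := Real.rpow_pos_of_pos hy0 _
  rcases le_or_gt R |y| with hcase | hcase
  · -- tail
    have h1 : (0:ℝ) < |y| - 1 := by linarith
    have h3 : (1 + |y|) / 3 ≤ |y| - 1 := by linarith
    have h30 : (0:ℝ) < (1 + |y|) / 3 := by linarith
    have key : (|y| - 1) ^ (-β - 1) ≤ 3 ^ (β + 1) * (1 + |y|) ^ (-β - 1) := by
      have h3e : ((3:ℝ) ^ (-β - 1)) = ((3:ℝ) ^ (β + 1))⁻¹ := by
        rw [← Real.rpow_neg (by norm_num : (0:ℝ) ≤ 3)]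
        ring_nf
      have h' := rpow_antitone h30 h3 he
      rw [Real.div_rpow hy0.le (by norm_num : (0:ℝ) ≤ 3), h3e, div_eq_mul_inv, inv_inv, mul_comm] at h'
      exact h'
    calc |iteratedDeriv r (phiFn σ) y| ≤ Ct * (|y| - 1) ^ (-β - 1) := htail y hcase
      _ ≤ Ct * (3 ^ (β + 1) * (1 + |y|) ^ (-β - 1)) := mul_le_mul_of_nonneg_left key hCt.le
      _ ≤ D * (1 + |y|) ^ (-β - 1) := by
          rw [hD, add_mul, ← mul_assoc]
          nlinarith [mul_pos hD2 hyR]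
  · -- compact part
    have hmem : y ∈ Set.Icc (-R) R := by
      constructor <;> [linarith [neg_abs_le y]; linarith [le_abs_self y]]
    have hb : |iteratedDeriv r (phiFn σ) y| ≤ M := by
      simpa using hM y hmem
    have key : M ≤ (M + 1) * (1 + R) ^ (β + 1) * (1 + |y|) ^ (-β - 1) := by
      have hle : (1 + R) ^ (-β - 1) ≤ (1 + |y|) ^ (-β - 1) :=
        rpow_antitone hy0 (by linarith) he
      have : (M + 1) * ((1 + R) ^ (β + 1) * (1 + R) ^ (-β - 1)) = M + 1 := by
        rw [← Real.rpow_add hRpos]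
        norm_num
      nlinarith [Real.rpow_pos_of_pos hRpos (β + 1)]
    calc |iteratedDeriv r (phiFn σ) y| ≤ M := hb
      _ ≤ (M + 1) * (1 + R) ^ (β + 1) * (1 + |y|) ^ (-β - 1) := key
      _ ≤ D * (1 + |y|) ^ (-β - 1) := by
          rw [hD, add_mul]
          nlinarith [mul_pos hD1 hyR]

end Decay

section Summab

variable {β : ℝ}

lemma summable_u {j : ℕ} (hj : (j:ℝ) + 1 < β) (D : ℝ) (x₀ : ℝ) :
    Summable (fun k : ℤ => D * (max 1 |(k:ℝ) - x₀|) ^ ((j:ℝ) - β - 1)) := by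
  have h1β : (1:ℝ) < β + 1 - j := by linarith
  have hsum : Summable (fun k : ℤ => (|D| * 2 ^ (β + 1 - j)) * |(k:ℝ)| ^ (-(β + 1 - j))) :=
    (Real.summable_abs_int_rpow h1β).mul_left _
  apply Summable.of_norm_bounded_eventually hsum
  have hfin : {k : ℤ | ¬ (2 * |x₀| + 2 ≤ |(k:ℝ)|)}.Finite := by
    apply Set.Finite.subset (Set.finite_Icc (⌈-(2 * |x₀| + 2)⌉) (⌊2 * |x₀| + 2⌋))
    intro k hk
    simp only [Set.mem_setOf_eq, not_le] at hk
    have h1 : ((k:ℝ)) ≤ 2 * |x₀| + 2 := (le_abs_self _).trans hk.le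
    have h2 : -(2 * |x₀| + 2) ≤ (k:ℝ) := by linarith [neg_abs_le ((k:ℝ))]
    exact ⟨Int.ceil_le.mpr h2, Int.le_floor.mpr h1⟩
  rw [Filter.eventually_cofinite]
  apply Set.Finite.subset hfin
  intro k hk
  simp only [Set.mem_setOf_eq] at hk ⊢
  intro hT
  apply hk
  -- now T ≤ |k|, prove the bound
  have hk2 : (2:ℝ) ≤ |(k:ℝ)| := by linarith [abs_nonneg x₀]
  have hk0 : (0:ℝ) < |(k:ℝ)| := by linarith
  have hhalf : |(k:ℝ)| / 2 ≤ |(k:ℝ) - x₀| := by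
    have := abs_sub_abs_le_abs_sub (k:ℝ) x₀
    linarith
  have hmax : (max 1 |(k:ℝ) - x₀|) = |(k:ℝ) - x₀| := by
    apply max_eq_right
    linarith
  have hpos : (0:ℝ) < |(k:ℝ)| / 2 := by linarith
  have hanti : |(k:ℝ) - x₀| ^ ((j:ℝ) - β - 1) ≤ (|(k:ℝ)| / 2) ^ ((j:ℝ) - β - 1) :=
    rpow_antitone hpos hhalf (by linarith)
  have hdiv : (|(k:ℝ)| / 2) ^ ((j:ℝ) - β - 1) = 2 ^ (β + 1 - j) * |(k:ℝ)| ^ (-(β + 1 - j)) := by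
    rw [Real.div_rpow (abs_nonneg _) (by norm_num : (0:ℝ) ≤ 2)]
    rw [div_eq_mul_inv, ← Real.rpow_neg (by norm_num : (0:ℝ) ≤ 2)]
    have : (-((j:ℝ) - β - 1)) = β + 1 - j := by ring
    rw [this]
    have : ((j:ℝ) - β - 1) = -(β + 1 - j) := by ring
    rw [this, mul_comm]
  have hDabs : ‖D * (max 1 |(k:ℝ) - x₀|) ^ ((j:ℝ) - β - 1)‖
      ≤ |D| * (max 1 |(k:ℝ) - x₀|) ^ ((j:ℝ) - β - 1) := by
    rw [Real.norm_eq_abs, abs_mul]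
    have : (0:ℝ) ≤ (max 1 |(k:ℝ) - x₀|) ^ ((j:ℝ) - β - 1) :=
      Real.rpow_nonneg (le_trans zero_le_one (le_max_left _ _)) _
    rw [abs_of_nonneg this]
  calc ‖D * (max 1 |(k:ℝ) - x₀|) ^ ((j:ℝ) - β - 1)‖
      ≤ |D| * (max 1 |(k:ℝ) - x₀|) ^ ((j:ℝ) - β - 1) := hDabs
    _ ≤ |D| * (2 ^ (β + 1 - j) * |(k:ℝ)| ^ (-(β + 1 - j))) := by
        rw [hmax]
        exact mul_le_mul_of_nonneg_left (le_of_le_of_eq hanti hdiv) (abs_nonneg _)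
    _ = |D| * 2 ^ (β + 1 - j) * |(k:ℝ)| ^ (-(β + 1 - j)) := by ring

lemma term_bound {g : ℝ → ℝ} {D : ℝ}
    (hg : ∀ y, |g y| ≤ D * (1 + |y|) ^ (-β - 1)) {j : ℕ} (hj : (j:ℝ) + 1 < β)
    (x₀ : ℝ) (k : ℤ) (y : ℝ) (hy : |y - x₀| ≤ 1) :
    |g (y - (k:ℝ)) * (((k:ℝ) - y) ^ j)| ≤ D * (max 1 |(k:ℝ) - x₀|) ^ ((j:ℝ) - β - 1) := by
  have hD : (0:ℝ) ≤ D := by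
    have := hg 0
    have h0 : (0:ℝ) < (1 + |(0:ℝ)|) ^ (-β - 1) := Real.rpow_pos_of_pos (by norm_num) _
    nlinarith [abs_nonneg (g 0)]
  set t := |y - (k:ℝ)| with ht
  have ht0 : (0:ℝ) ≤ t := abs_nonneg _
  have hb : (0:ℝ) < 1 + t := by linarith
  have habs : |((k:ℝ) - y)| = t := by rw [ht, abs_sub_comm]
  have step1 : |g (y - (k:ℝ)) * (((k:ℝ) - y) ^ j)| ≤ (D * (1 + t) ^ (-β - 1)) * (1 + t) ^ j := by
    rw [abs_mul, abs_pow, habs]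
    apply mul_le_mul (hg _) (pow_le_pow_left₀ ht0 (by linarith) j) (by positivity) (by positivity)
  have step2 : (D * (1 + t) ^ (-β - 1)) * (1 + t) ^ j = D * (1 + t) ^ ((j:ℝ) - β - 1) := by
    rw [mul_assoc, ← Real.rpow_natCast (1 + t) j, ← Real.rpow_add hb]
    ring_nf
  have hle : (max 1 |(k:ℝ) - x₀|) ≤ 1 + t := by
    apply max_le (by linarith)
    have := abs_sub_abs_le_abs_sub ((k:ℝ) - x₀) ((k:ℝ) - y)
    have h2 : |(k:ℝ) - x₀ - ((k:ℝ) - y)| = |y - x₀| := by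
      congr 1; ring
    rw [h2, habs] at this
    linarith
  have hmaxpos : (0:ℝ) < max 1 |(k:ℝ) - x₀| := lt_of_lt_of_le zero_lt_one (le_max_left _ _)
  have step3 : (1 + t) ^ ((j:ℝ) - β - 1) ≤ (max 1 |(k:ℝ) - x₀|) ^ ((j:ℝ) - β - 1) :=
    rpow_antitone hmaxpos hle (by linarith)
  calc |g (y - (k:ℝ)) * (((k:ℝ) - y) ^ j)| ≤ (D * (1 + t) ^ (-β - 1)) * (1 + t) ^ j := step1
    _ = D * (1 + t) ^ ((j:ℝ) - β - 1) := step2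
    _ ≤ D * (max 1 |(k:ℝ) - x₀|) ^ ((j:ℝ) - β - 1) := mul_le_mul_of_nonneg_left step3 hD

lemma summable_term {g : ℝ → ℝ} {D : ℝ}
    (hg : ∀ y, |g y| ≤ D * (1 + |y|) ^ (-β - 1)) {j : ℕ} (hj : (j:ℝ) + 1 < β) (x : ℝ) :
    Summable (fun k : ℤ => g (x - (k:ℝ)) * (((k:ℝ) - x) ^ j)) := by
  apply Summable.of_norm_bounded (summable_u hj D x)
  intro k
  rw [Real.norm_eq_abs]
  exact term_bound hg hj x k x (by simp)

end Summab

section DerivStep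

variable {σ : ℝ → ℝ} {m : ℕ} {β : ℝ} {K C : ℕ → ℝ}

lemma hasDerivAt_M (h : ContDiff ℝ m σ) (hm : 2 ≤ m) (hβ : (m:ℝ) + 1 < β)
    (hK : ∀ s : ℕ, 1 ≤ s → s ≤ m → 0 < K s ∧ 0 < C s ∧
      ∀ x : ℝ, K s ≤ |x| → |iteratedDeriv s σ x| ≤ C s * |x| ^ (-β - 1))
    {r j : ℕ} (hr : r + 1 ≤ m) (hj : j ≤ m) (x : ℝ) :
    HasDerivAt (fun y => ∑' k : ℤ, iteratedDeriv r (phiFn σ) (y - (k:ℝ)) * ((k:ℝ) - y) ^ j)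
      ((∑' k : ℤ, iteratedDeriv (r+1) (phiFn σ) (x - (k:ℝ)) * ((k:ℝ) - x) ^ j)
        - (j:ℝ) * ∑' k : ℤ, iteratedDeriv r (phiFn σ) (x - (k:ℝ)) * ((k:ℝ) - x) ^ (j - 1)) x := by
  have hβ0 : (0:ℝ) ≤ β := by
    have : (0:ℝ) ≤ (m:ℝ) := Nat.cast_nonneg m
    linarith
  have hβj : (j:ℝ) + 1 < β := by
    have : (j:ℝ) ≤ (m:ℝ) := Nat.cast_le.mpr hj
    linarith
  have hβj1 : ((j - 1 : ℕ):ℝ) + 1 < β := by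
    have : ((j - 1 : ℕ):ℝ) ≤ (j:ℝ) := Nat.cast_le.mpr (Nat.sub_le _ _)
    linarith
  obtain ⟨D0, hD0, hg0⟩ := global_decay h hm hβ0 hK (le_trans (Nat.le_succ r) hr)
  obtain ⟨D1, hD1, hg1⟩ := global_decay h hm hβ0 hK hr
  set g : ℝ → ℝ := iteratedDeriv r (phiFn σ) with hgdef
  set g1 : ℝ → ℝ := iteratedDeriv (r+1) (phiFn σ) with hg1def
  set u : ℤ → ℝ := fun k =>
    D1 * (max 1 |(k:ℝ) - x|) ^ ((j:ℝ) - β - 1)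
      + (j:ℝ) * (D0 * (max 1 |(k:ℝ) - x|) ^ (((j-1:ℕ):ℝ) - β - 1)) with hu
  have husum : Summable u :=
    (summable_u hβj D1 x).add ((summable_u hβj1 D0 x).mul_left (j:ℝ))
  -- derivative of each term
  have hgd : ∀ z : ℝ, HasDerivAt g (g1 z) z := by
    intro z
    have hd : Differentiable ℝ g :=
      (phi_contDiff h).differentiable_iteratedDeriv r (by exact_mod_cast hr)
    have hdg : deriv g z = g1 z := by rw [hg1def, iteratedDeriv_succ]
    exact hdg ▸ (hd z).hasDerivAt
  have hterm : ∀ (k : ℤ) (y : ℝ),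
      HasDerivAt (fun y : ℝ => g (y - (k:ℝ)) * ((k:ℝ) - y) ^ j)
        (g1 (y - (k:ℝ)) * ((k:ℝ) - y) ^ j
          + g (y - (k:ℝ)) * (-((j:ℝ) * ((k:ℝ) - y) ^ (j - 1)))) y := by
    intro k y
    have h1 : HasDerivAt (fun y : ℝ => g (y - (k:ℝ))) (g1 (y - (k:ℝ))) y := by
      have := (hgd (y - (k:ℝ))).comp y ((hasDerivAt_id y).sub_const (k:ℝ))
      simpa [Function.comp_def] using this
    have h2 : HasDerivAt (fun y : ℝ => ((k:ℝ) - y) ^ j)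
        (-((j:ℝ) * ((k:ℝ) - y) ^ (j - 1))) y := by
      have := (hasDerivAt_pow j ((k:ℝ) - y)).comp y
        ((hasDerivAt_const y (k:ℝ)).sub (hasDerivAt_id y))
      simpa [Function.comp_def] using this
    simpa [Pi.mul_def] using h1.mul h2
  -- bound on ball
  have hbound : ∀ (k : ℤ) (y : ℝ), y ∈ Metric.ball x 1 →
      ‖g1 (y - (k:ℝ)) * ((k:ℝ) - y) ^ j
          + g (y - (k:ℝ)) * (-((j:ℝ) * ((k:ℝ) - y) ^ (j - 1)))‖ ≤ u k := by
    intro k y hy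
    have hy1 : |y - x| ≤ 1 := by
      rw [Metric.mem_ball, Real.dist_eq] at hy
      exact hy.le
    have b1 : |g1 (y - (k:ℝ)) * ((k:ℝ) - y) ^ j|
        ≤ D1 * (max 1 |(k:ℝ) - x|) ^ ((j:ℝ) - β - 1) :=
      term_bound (fun z => hg1 z) hβj x k y hy1
    have b2 : |g (y - (k:ℝ)) * ((k:ℝ) - y) ^ (j - 1)|
        ≤ D0 * (max 1 |(k:ℝ) - x|) ^ (((j-1:ℕ):ℝ) - β - 1) :=
      term_bound (fun z => hg0 z) hβj1 x k y hy1
    rw [Real.norm_eq_abs]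
    calc |g1 (y - (k:ℝ)) * ((k:ℝ) - y) ^ j
          + g (y - (k:ℝ)) * (-((j:ℝ) * ((k:ℝ) - y) ^ (j - 1)))|
        ≤ |g1 (y - (k:ℝ)) * ((k:ℝ) - y) ^ j|
          + |g (y - (k:ℝ)) * (-((j:ℝ) * ((k:ℝ) - y) ^ (j - 1)))| := abs_add_le _ _
      _ ≤ D1 * (max 1 |(k:ℝ) - x|) ^ ((j:ℝ) - β - 1)
          + (j:ℝ) * |g (y - (k:ℝ)) * ((k:ℝ) - y) ^ (j - 1)| := by
          have : |g (y - (k:ℝ)) * (-((j:ℝ) * ((k:ℝ) - y) ^ (j - 1)))|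
              = (j:ℝ) * |g (y - (k:ℝ)) * ((k:ℝ) - y) ^ (j - 1)| := by
            rw [abs_mul, abs_neg, abs_mul, abs_mul]
            rw [Nat.abs_cast]
            ring
          rw [this]
          exact add_le_add b1 le_rfl
      _ ≤ u k := by
          rw [hu]
          have := mul_le_mul_of_nonneg_left b2 (Nat.cast_nonneg j : (0:ℝ) ≤ (j:ℝ))
          dsimp only
          linarith
  have hsum0 : Summable (fun k : ℤ => g (x - (k:ℝ)) * ((k:ℝ) - x) ^ j) :=
    summable_term (fun z => hg0 z) hβj x
  have key := hasDerivAt_tsum_of_isPreconnected husum Metric.isOpen_ball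
    (convex_ball x 1).isPreconnected (fun k y _ => hterm k y) hbound
    (Metric.mem_ball_self one_pos) hsum0 (Metric.mem_ball_self one_pos)
  have S1 : Summable (fun k : ℤ => g1 (x - (k:ℝ)) * ((k:ℝ) - x) ^ j) :=
    summable_term (fun z => hg1 z) hβj x
  have S2 : Summable (fun k : ℤ => g (x - (k:ℝ)) * ((k:ℝ) - x) ^ (j - 1)) :=
    summable_term (fun z => hg0 z) hβj1 x
  have S2' : Summable (fun k : ℤ => g (x - (k:ℝ)) * (-((j:ℝ) * ((k:ℝ) - x) ^ (j - 1)))) := by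
    apply (S2.mul_left (-(j:ℝ))).congr
    intro k
    ring
  have veq : (∑' k : ℤ, (g1 (x - (k:ℝ)) * ((k:ℝ) - x) ^ j
        + g (x - (k:ℝ)) * (-((j:ℝ) * ((k:ℝ) - x) ^ (j - 1)))))
      = (∑' k : ℤ, g1 (x - (k:ℝ)) * ((k:ℝ) - x) ^ j)
        - (j:ℝ) * ∑' k : ℤ, g (x - (k:ℝ)) * ((k:ℝ) - x) ^ (j - 1) := by
    rw [S1.tsum_add S2']
    have e2 : ∑' k : ℤ, g (x - (k:ℝ)) * (-((j:ℝ) * ((k:ℝ) - x) ^ (j - 1)))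
        = (-(j:ℝ)) * ∑' k : ℤ, g (x - (k:ℝ)) * ((k:ℝ) - x) ^ (j - 1) := by
      rw [← tsum_mul_left]
      exact tsum_congr (fun k => by ring)
    rw [e2]
    ring
  rw [← veq]
  exact key

end DerivStep

section PU

variable {σ : ℝ → ℝ} {m : ℕ} {β : ℝ} {K C : ℕ → ℝ}

lemma partial_sum_phi (σ : ℝ → ℝ) (x : ℝ) (N : ℕ) :
    ∑ k ∈ Finset.Icc (-(N:ℤ)) (N:ℤ), phiFn σ (x - (k:ℝ))
      = (σ (x + N + 1) + σ (x + N) - σ (x - N) - σ (x - N - 1)) / 2 := by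
  induction N with
  | zero => simp [phiFn]
  | succ N ih =>
    have hset : Finset.Icc (-((N+1:ℕ):ℤ)) ((N+1:ℕ):ℤ)
        = insert (-((N+1:ℕ):ℤ)) (insert ((N+1:ℕ):ℤ) (Finset.Icc (-(N:ℤ)) (N:ℤ))) := by
      ext k
      simp only [Finset.mem_Icc, Finset.mem_insert]
      omega
    have h1 : (-((N+1:ℕ):ℤ)) ∉ insert ((N+1:ℕ):ℤ) (Finset.Icc (-(N:ℤ)) (N:ℤ)) := by
      simp only [Finset.mem_insert, Finset.mem_Icc]
      omega
    have h2 : ((N+1:ℕ):ℤ) ∉ Finset.Icc (-(N:ℤ)) (N:ℤ) := by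
      simp only [Finset.mem_Icc]
      omega
    rw [hset, Finset.sum_insert h1, Finset.sum_insert h2, ih]
    simp only [phiFn]
    push_cast
    ring_nf

lemma partition_unity {x : ℝ} (hbot : Tendsto σ atBot (𝓝 0)) (htop : Tendsto σ atTop (𝓝 1))
    (hsum : Summable (fun k : ℤ => phiFn σ (x - (k:ℝ)))) :
    ∑' k : ℤ, phiFn σ (x - (k:ℝ)) = 1 := by
  have hhs : HasSum (fun k : ℤ => phiFn σ (x - (k:ℝ))) (∑' k : ℤ, phiFn σ (x - (k:ℝ))) :=
    hsum.hasSum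
  have hmono : Monotone (fun N : ℕ => Finset.Icc (-(N:ℤ)) (N:ℤ)) := by
    intro a b hab
    apply Finset.Icc_subset_Icc <;> omega
  have hexh : ∀ k : ℤ, ∃ N : ℕ, k ∈ Finset.Icc (-(N:ℤ)) (N:ℤ) := by
    intro k
    exact ⟨k.natAbs, Finset.mem_Icc.mpr (by constructor <;> omega)⟩
  have htend : Tendsto (fun N : ℕ => ∑ k ∈ Finset.Icc (-(N:ℤ)) (N:ℤ), phiFn σ (x - (k:ℝ)))
      atTop (𝓝 (∑' k : ℤ, phiFn σ (x - (k:ℝ)))) :=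
    hhs.comp (Filter.tendsto_atTop_finset_of_monotone hmono hexh)
  have hN : Tendsto (fun N : ℕ => (N:ℝ)) atTop atTop := tendsto_natCast_atTop_atTop
  have t1 : Tendsto (fun N : ℕ => σ (x + N + 1)) atTop (𝓝 1) := by
    apply htop.comp
    apply tendsto_atTop_add_const_right
    exact tendsto_atTop_add_const_left _ _ hN
  have t2 : Tendsto (fun N : ℕ => σ (x + N)) atTop (𝓝 1) := by
    apply htop.comp
    exact tendsto_atTop_add_const_left _ _ hN
  have hNneg : Tendsto (fun N : ℕ => -(N:ℝ)) atTop atBot := by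
    exact tendsto_neg_atBot_iff.mpr hN
  have t3 : Tendsto (fun N : ℕ => σ (x - N)) atTop (𝓝 0) := by
    apply hbot.comp
    have := tendsto_atBot_add_const_left atTop x hNneg
    apply this.congr
    intro N
    ring
  have t4 : Tendsto (fun N : ℕ => σ (x - N - 1)) atTop (𝓝 0) := by
    apply hbot.comp
    have := tendsto_atBot_add_const_right atTop (-1 : ℝ)
      (tendsto_atBot_add_const_left atTop x hNneg)
    apply this.congr
    intro N
    ring
  have htend2 : Tendsto (fun N : ℕ => (σ (x + N + 1) + σ (x + N) - σ (x - N) - σ (x - N - 1)) / 2)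
      atTop (𝓝 1) := by
    have := (((t1.add t2).sub t3).sub t4).div_const 2
    norm_num at this
    exact this
  have := htend.congr (fun N => partial_sum_phi σ x N)
  exact tendsto_nhds_unique this htend2

end PU

theorem alg_moment_deriv_top (σ : ℝ → ℝ) (α β : ℝ) (m : ℕ) (K C : ℕ → ℝ) (A : ℕ → ℝ)
    (hσ : Sigmoidal σ) (hmono : Monotone σ) (h1 : Sigma1 σ) (h2 : Sigma2 σ) (h3 : Sigma3 σ α)
    (h4 : Sigma4 σ m β K C) (h5 : Sigma5 σ m A)
    (s : ℕ) (hs1 : 1 ≤ s) (hsm : s ≤ m) (x : ℝ) :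
    algMoment (iteratedDeriv s (phiFn σ)) s x = (s.factorial : ℝ) := by

  obtain ⟨hmeas, hbot, htop⟩ := hσ
  obtain ⟨hm2, hβ, hcd, hK⟩ := h4
  have hβ0 : (0:ℝ) ≤ β := by
    have : (0:ℝ) ≤ (m:ℝ) := Nat.cast_nonneg m
    linarith
  set A' : ℕ → ℝ := fun i => if i = 0 then 1 else A i with hA'
  have main : ∀ r : ℕ, r ≤ s → ∀ j : ℕ, r ≤ j → j ≤ s → ∀ y : ℝ,
      algMoment (iteratedDeriv r (phiFn σ)) j y = (j.descFactorial r : ℝ) * A' (j - r) := by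
    intro r
    induction r with
    | zero =>
      intro _ j _ hjs y
      rcases Nat.eq_zero_or_pos j with rfl | hjpos
      · -- j = 0 : partition of unity
        obtain ⟨D, hD, hg⟩ := global_decay hcd hm2 hβ0 hK (Nat.zero_le m)
        have hβ1 : ((0:ℕ):ℝ) + 1 < β := by
          have : (2:ℝ) ≤ (m:ℝ) := by exact_mod_cast hm2
          push_cast
          linarith
        have hsum : Summable (fun k : ℤ => phiFn σ (y - (k:ℝ))) := by
          have hs := summable_term (j := 0) hg hβ1 y
          apply hs.congr
          intro k
          simp [iteratedDeriv_zero]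
        have hPU := partition_unity (σ := σ) (x := y) hbot htop hsum
        have : algMoment (iteratedDeriv 0 (phiFn σ)) 0 y = ∑' k : ℤ, phiFn σ (y - (k:ℝ)) := by
          simp only [algMoment, iteratedDeriv_zero, pow_zero, mul_one]
        rw [this, hPU]
        simp [hA']
      · -- j ≥ 1 : Sigma5
        have h5j := h5 j hjpos (le_trans hjs hsm) y
        have : algMoment (iteratedDeriv 0 (phiFn σ)) j y = algMoment (phiFn σ) j y := by
          simp only [iteratedDeriv_zero]
        rw [this, h5j]
        have hj0 : j ≠ 0 := Nat.pos_iff_ne_zero.mp hjpos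
        simp [hA', hj0]
    | succ r ih =>
      intro hrs j hrj hjs y
      have hjm : j ≤ m := le_trans hjs hsm
      have hr1m : r + 1 ≤ m := le_trans hrj hjm
      have hconst : ∀ z : ℝ, algMoment (iteratedDeriv r (phiFn σ)) j z
          = (j.descFactorial r : ℝ) * A' (j - r) :=
        ih (by omega) j (by omega) hjs
      have hDer := hasDerivAt_M hcd hm2 hβ hK hr1m hjm y
      have hconstF : (fun z : ℝ => ∑' k : ℤ,
            iteratedDeriv r (phiFn σ) (z - (k:ℝ)) * ((k:ℝ) - z) ^ j)
          = fun _ : ℝ => (j.descFactorial r : ℝ) * A' (j - r) := by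
        funext z
        exact hconst z
      have h0 : HasDerivAt (fun z : ℝ => ∑' k : ℤ,
            iteratedDeriv r (phiFn σ) (z - (k:ℝ)) * ((k:ℝ) - z) ^ j) 0 y := by
        rw [hconstF]
        exact hasDerivAt_const y _
      have huniq := hDer.unique h0
      have hT2 : algMoment (iteratedDeriv r (phiFn σ)) (j - 1) y
          = ((j - 1).descFactorial r : ℝ) * A' (j - 1 - r) :=
        ih (by omega) (j - 1) (by omega) (by omega) y
      have hgoal : algMoment (iteratedDeriv (r + 1) (phiFn σ)) j y
          = (j:ℝ) * algMoment (iteratedDeriv r (phiFn σ)) (j - 1) y := by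
        simp only [algMoment]
        linarith [huniq]
      rw [hgoal, hT2]
      have hdesc : (j.descFactorial (r + 1) : ℝ) = (j:ℝ) * ((j - 1).descFactorial r : ℝ) := by
        obtain ⟨j', rfl⟩ : ∃ j', j = j' + 1 := ⟨j - 1, by omega⟩
        rw [Nat.succ_descFactorial_succ]
        push_cast
        simp
      rw [hdesc]
      have : j - (r + 1) = j - 1 - r := by omega
      rw [this]
      ring
  have := main s le_rfl s le_rfl le_rfl x
  rw [this]
  have h1 : (s.descFactorial s : ℝ) = (s.factorial : ℝ) := by
    rw [Nat.descFactorial_self]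
  rw [h1]
  simp [hA']
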